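/- The fan F_ω is 1/3-homogeneous. -/

import Mathlib

open Set Filter Topology Metric

namespace FansHomogeneity

/-- `A` is an arc in `X` with endpoints `p` and `q`. -/
def IsArcWith {X : Type*} [TopologicalSpace X] (A : Set X) (p q : X) : Prop :=
  ∃ h : unitInterval ≃ₜ A, (h 0 : X) = p ∧ (h 1 : X) = q

/-- `A` is the (possibly degenerate) arc with endpoints `p` and `q`:
either `p = q` and `A = {p}`, or `A` is an arc from `p` to `q`. -/
def IsArcOrPt {X : Type*} [TopologicalSpace X] (A : Set X) (p q : X) : Prop :=
  (p = q ∧ A = {p}) ∨ IsArcWith A p q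

/-- A subcontinuum of a space: a nonempty compact connected subset. -/
def IsSubcontinuum {X : Type*} [TopologicalSpace X] (A : Set X) : Prop :=
  IsCompact A ∧ IsConnected A

/-- A space is hereditarily unicoherent if the intersection of any two subcontinua
is connected. -/
def HereditarilyUnicoherent (X : Type*) [TopologicalSpace X] : Prop :=
  ∀ A B : Set X, IsSubcontinuum A → IsSubcontinuum B → IsPreconnected (A ∩ B)

/-- A space is arcwise connected if any two distinct points are the endpoints of an arc. -/
def ArcwiseConnected (X : Type*) [TopologicalSpace X] : Prop :=
  ∀ p q : X, p ≠ q → ∃ A : Set X, IsArcWith A p q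

/-- A dendroid: an arcwise connected, hereditarily unicoherent continuum
(nonempty compact connected metric space). -/
def IsDendroid (X : Type*) [MetricSpace X] : Prop :=
  CompactSpace X ∧ ConnectedSpace X ∧ ArcwiseConnected X ∧ HereditarilyUnicoherent X

/-- `p` has order at least `n`: `p` is a common endpoint of `n` arcs in `X` which
pairwise intersect only in `p`. -/
def OrderGe (X : Type*) [TopologicalSpace X] (p : X) (n : ℕ) : Prop :=
  ∃ F : Fin n → Set X, (∀ i, ∃ q : X, IsArcWith (F i) p q) ∧
    ∀ i j, i ≠ j → F i ∩ F j = {p}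

/-- The endpoints of `X`: points of order exactly `1`. -/
def endpoints (X : Type*) [TopologicalSpace X] : Set X :=
  {p | OrderGe X p 1 ∧ ¬ OrderGe X p 2}

/-- The ordinary points of `X`: points of order exactly `2`. -/
def ordinaryPoints (X : Type*) [TopologicalSpace X] : Set X :=
  {p | OrderGe X p 2 ∧ ¬ OrderGe X p 3}

/-- The ramification points of `X`: points of order greater than `2`. -/
def ramificationPoints (X : Type*) [TopologicalSpace X] : Set X :=
  {p | OrderGe X p 3}

/-- A fan with top `t`: a dendroid whose unique ramification point is `t`. -/
def IsFanWithTop (X : Type*) [MetricSpace X] (t : X) : Prop :=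
  IsDendroid X ∧ ramificationPoints X = {t}

/-- A fan: a dendroid with exactly one ramification point. -/
def IsFan (X : Type*) [MetricSpace X] : Prop :=
  ∃ t : X, IsFanWithTop X t

/-- The orbit of a point under the action of the homeomorphism group of `X`. -/
def orbit (X : Type*) [TopologicalSpace X] (x : X) : Set X :=
  {y | ∃ h : X ≃ₜ X, h x = y}

/-- `A` is an orbit of the action of the homeomorphism group of `X` on `X`. -/
def IsOrbit (X : Type*) [TopologicalSpace X] (A : Set X) : Prop :=
  ∃ x : X, A = orbit X x

/-- The set of orbits of the action of the homeomorphism group of `X` on `X`. -/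
def orbits (X : Type*) [TopologicalSpace X] : Set (Set X) :=
  {A | IsOrbit X A}

/-- `X` is `1/n`-homogeneous (has homogeneity degree `n`): the action of the
homeomorphism group of `X` on `X` has exactly `n` orbits. -/
def OneOverHomogeneous (X : Type*) [TopologicalSpace X] (n : ℕ) : Prop :=
  (orbits X).ncard = n

/-- A fan `X` with top `t` is smooth at `t` with respect to `a` if for every sequence
converging to `a` the arcs from `t` converge, in the Hausdorff metric, to the arc `t a`. -/
def SmoothAt (X : Type*) [MetricSpace X] (t a : X) : Prop :=
  ∀ (α : ℕ → X) (A : ℕ → Set X) (B : Set X),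
    Tendsto α atTop (nhds a) → (∀ n, IsArcOrPt (A n) t (α n)) → IsArcOrPt B t a →
    Tendsto (fun n => hausdorffDist (A n) B) atTop (nhds 0)

/-- `S(X)`: the set of points `a` such that `X` is smooth at the top `t` with respect to `a`. -/
def smoothSet (X : Type*) [MetricSpace X] (t : X) : Set X :=
  {a | SmoothAt X t a}

/-- A smooth fan with top `t`. -/
def IsSmoothFanWithTop (X : Type*) [MetricSpace X] (t : X) : Prop :=
  IsFanWithTop X t ∧ smoothSet X t = univ

/-- A smooth fan. -/
def IsSmoothFan (X : Type*) [MetricSpace X] : Prop :=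
  ∃ t : X, IsSmoothFanWithTop X t

/-- The relation on `cantorSet × [0,1]` generating the identification of
`cantorSet × {1}` to a point. -/
def cantorFanRel (a b : ↥cantorSet × unitInterval) : Prop :=
  a.2 = 1 ∧ b.2 = 1

/-- The Cantor fan: the quotient `(C × [0,1]) / (C × {1})` where `C` is the
middle-thirds Cantor set. -/
def CantorFan : Type := Quot cantorFanRel

instance : TopologicalSpace CantorFan :=
  instTopologicalSpaceQuot

/-- The fan `F_ω ⊆ ℝ²`: the union of the segments from `(0,0)` to `(1/i, 1/i²)`, `i ≥ 1`. -/
def Fomega : Set (ℝ × ℝ) :=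
  ⋃ i : ℕ, segment ℝ ((0, 0) : ℝ × ℝ) ((1 / ((i : ℝ) + 1), 1 / ((i : ℝ) + 1) ^ 2) : ℝ × ℝ)

/-- The shrinking Cantor fan `F_{C_ω} ⊆ ℝ²`: for each `i ≥ 1` the union of the segments
from the origin to `(c, 1/2^(i-1))` for `c ∈ C ∩ [(3^(i-1)-1)/3^(i-1), (3^i-2)/3^i]`
(here indexed by `i - 1 ∈ ℕ`). -/
def shrinkingCantorFan : Set (ℝ × ℝ) :=
  ⋃ i : ℕ, ⋃ c ∈ cantorSet ∩
      Icc (((3 : ℝ) ^ i - 1) / 3 ^ i) (((3 : ℝ) ^ (i + 1) - 2) / 3 ^ (i + 1)),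
    segment ℝ ((0, 0) : ℝ × ℝ) ((c, (1 / 2 : ℝ) ^ i) : ℝ × ℝ)

/-- `S` is a simple `n`-od in the plane: the union of `n` straight line segments
which pairwise intersect exactly in a common endpoint. -/
def IsSimpleNod (n : ℕ) (S : Set (ℝ × ℝ)) : Prop :=
  ∃ (o : ℝ × ℝ) (b : Fin n → ℝ × ℝ),
    (∀ i, b i ≠ o) ∧
    S = ⋃ i, segment ℝ o (b i) ∧
    ∀ i j, i ≠ j → segment ℝ o (b i) ∩ segment ℝ o (b j) = {o}

/-- `X` is colocally connected at `p`: every neighborhood of `p` contains a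
neighborhood `V` of `p` such that `X - V` is connected. -/
def ColocallyConnectedAt (X : Type*) [TopologicalSpace X] (p : X) : Prop :=
  ∀ U ∈ nhds p, ∃ V ∈ nhds p, V ⊆ U ∧ IsPreconnected Vᶜ

/-- `X` is homeomorphic to the Lelek fan, i.e. to a smooth fan whose set of
endpoints is dense in it. -/
def HomeoToLelekFan (X : Type*) [TopologicalSpace X] : Prop :=
  ∃ (Y : Type) (m : MetricSpace Y),
    @IsSmoothFan Y m ∧
    @Dense Y (@UniformSpace.toTopologicalSpace Y
        (@PseudoMetricSpace.toUniformSpace Y m.toPseudoMetricSpace))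
      (@endpoints Y (@UniformSpace.toTopologicalSpace Y
        (@PseudoMetricSpace.toUniformSpace Y m.toPseudoMetricSpace))) ∧
    Nonempty (@Homeomorph X Y _ (@UniformSpace.toTopologicalSpace Y
        (@PseudoMetricSpace.toUniformSpace Y m.toPseudoMetricSpace)))

noncomputable section
open scoped Classical

/-! ### Basic geometry of the fan -/

def sl (i : ℕ) : ℝ := 1 / ((i : ℝ) + 1)

lemma sl_pos (i : ℕ) : 0 < sl i := by
  have : (0:ℝ) < (i:ℝ) + 1 := by positivity
  exact one_div_pos.2 this

lemma sl_ne (i : ℕ) : sl i ≠ 0 := (sl_pos i).ne'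

lemma sl_inj : Function.Injective sl := by
  intro i j h
  have h' : ((i:ℝ)+1)⁻¹ = ((j:ℝ)+1)⁻¹ := by simpa [sl, one_div] using h
  have h'' := inv_injective h'
  exact_mod_cast add_right_cancel h''

def bp (i : ℕ) : ℝ × ℝ := (sl i, sl i ^ 2)

def leg (i : ℕ) : Set (ℝ × ℝ) := segment ℝ 0 (bp i)

lemma Fomega_eq : Fomega = ⋃ i, leg i := by
  unfold Fomega leg bp sl
  congr 1
  ext i
  rw [Prod.mk_zero_zero]
  simp only [one_div_pow]

lemma mem_leg {p : ℝ × ℝ} {i : ℕ} : p ∈ leg i ↔ ∃ t, t ∈ Icc (0:ℝ) 1 ∧ p = t • bp i := by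
  rw [leg, segment_eq_image]
  constructor
  · rintro ⟨θ, hθ, rfl⟩
    exact ⟨θ, hθ, by simp⟩
  · rintro ⟨t, ht, rfl⟩
    exact ⟨t, ht, by simp⟩

lemma smul_bp_def (t : ℝ) (i : ℕ) : t • bp i = (t * sl i, t * sl i ^ 2) := rfl

lemma smul_bp_eq_zero {t : ℝ} {i : ℕ} : t • bp i = 0 ↔ t = 0 := by
  constructor
  · intro h
    have h1 : t * sl i = 0 := congrArg Prod.fst h
    exact (mul_eq_zero.1 h1).resolve_right (sl_ne i)
  · rintro rfl; exact zero_smul _ _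

lemma rep_unique {i j : ℕ} {t u : ℝ} (h : t • bp i = u • bp j) (ht : t ≠ 0) :
    i = j ∧ t = u := by
  have h1 : t * sl i = u * sl j := congrArg Prod.fst h
  have h2 : t * sl i ^ 2 = u * sl j ^ 2 := congrArg Prod.snd h
  have hts : t * sl i ≠ 0 := mul_ne_zero ht (sl_ne i)
  have h3 : (t * sl i) * sl i = (t * sl i) * sl j := by
    calc (t * sl i) * sl i = t * sl i ^ 2 := by ring
      _ = u * sl j ^ 2 := h2
      _ = (u * sl j) * sl j := by ring
      _ = (t * sl i) * sl j := by rw [h1]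
  have hsl : sl i = sl j := mul_left_cancel₀ hts h3
  have hij : i = j := sl_inj hsl
  subst hij
  exact ⟨rfl, mul_right_cancel₀ (sl_ne i) h1⟩

/-! ### Compactness -/

def legsIn (S : Set ℕ) : Set (ℝ × ℝ) := ⋃ i ∈ S, leg i

lemma isCompact_slSet (S : Set ℕ) : IsCompact (insert (0:ℝ) (sl '' S)) := by
  set f : ℕ → ℝ := fun n => if n ∈ S then sl n else 0 with hf
  have hsl : Tendsto (fun n : ℕ => sl n) atTop (𝓝 0) := by
    simpa [sl] using tendsto_one_div_add_atTop_nhds_zero_nat (𝕜 := ℝ)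
  have htf : Tendsto f atTop (𝓝 0) := by
    apply squeeze_zero (fun n => ?_) (fun n => ?_) hsl
    · by_cases h : n ∈ S <;> simp [hf, h, (sl_pos n).le]
    · by_cases h : n ∈ S <;> simp [hf, h, (sl_pos n).le]
  have h := htf.isCompact_insert_range
  have heq : insert (0:ℝ) (range f) = insert 0 (sl '' S) := by
    ext x
    simp only [mem_insert_iff, mem_range, mem_image]
    constructor
    · rintro (rfl | ⟨n, rfl⟩)
      · exact Or.inl rfl
      · by_cases hn : n ∈ S
        · exact Or.inr ⟨n, hn, by simp [hf, hn]⟩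
        · exact Or.inl (by simp [hf, hn])
    · rintro (rfl | ⟨n, hn, rfl⟩)
      · exact Or.inl rfl
      · exact Or.inr ⟨n, by simp [hf, hn]⟩
  rwa [heq] at h

lemma legsIn_eq {S : Set ℕ} (hS : S.Nonempty) :
    legsIn S = (fun q : ℝ × ℝ => (q.1 * q.2, q.1 * q.2 ^ 2)) ''
      (Icc (0:ℝ) 1 ×ˢ insert (0:ℝ) (sl '' S)) := by
  obtain ⟨i0, hi0⟩ := hS
  ext p
  simp only [legsIn, mem_iUnion, mem_image, mem_prod, Prod.exists]
  constructor
  · rintro ⟨i, hi, hp⟩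
    obtain ⟨t, ht, rfl⟩ := mem_leg.1 hp
    exact ⟨t, sl i, ⟨ht, Or.inr ⟨i, hi, rfl⟩⟩, rfl⟩
  · rintro ⟨t, x, ⟨ht, hx⟩, rfl⟩
    rcases hx with rfl | ⟨i, hi, rfl⟩
    · refine ⟨i0, hi0, mem_leg.2 ⟨0, ⟨le_refl 0, zero_le_one⟩, ?_⟩⟩
      simp [smul_bp_def]
    · exact ⟨i, hi, mem_leg.2 ⟨t, ht, rfl⟩⟩

lemma isCompact_legsIn (S : Set ℕ) : IsCompact (legsIn S) := by
  rcases S.eq_empty_or_nonempty with rfl | hS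
  · simp [legsIn]
  · rw [legsIn_eq hS]
    exact ((isCompact_Icc.prod (isCompact_slSet S)).image (by fun_prop))

lemma isClosed_legsIn (S : Set ℕ) : IsClosed (legsIn S) := (isCompact_legsIn S).isClosed

lemma Fomega_legsIn : Fomega = legsIn univ := by
  rw [Fomega_eq]; simp [legsIn]

lemma mem_Fomega {p : ℝ × ℝ} : p ∈ Fomega ↔ ∃ i t, t ∈ Icc (0:ℝ) 1 ∧ p = t • bp i := by
  rw [Fomega_eq]
  simp only [mem_iUnion, mem_leg]

instance : CompactSpace ↥Fomega :=
  isCompact_iff_compactSpace.1 (Fomega_legsIn ▸ isCompact_legsIn univ)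


/-! ### Points and representations -/

lemma smul_bp_mem {t : ℝ} (i : ℕ) (ht : t ∈ Icc (0:ℝ) 1) : t • bp i ∈ Fomega :=
  mem_Fomega.2 ⟨i, t, ht, rfl⟩

def pt (i : ℕ) (t : ℝ) (ht : t ∈ Icc (0:ℝ) 1) : ↥Fomega := ⟨t • bp i, smul_bp_mem i ht⟩

lemma exists_rep (p : ↥Fomega) :
    ∃ q : ℕ × ℝ, q.2 ∈ Icc (0:ℝ) 1 ∧ (p : ℝ × ℝ) = q.2 • bp q.1 := by
  obtain ⟨i, t, ht, he⟩ := mem_Fomega.1 p.2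
  exact ⟨(i, t), ht, he⟩

def repIdx (p : ↥Fomega) : ℕ := (exists_rep p).choose.1

def repT (p : ↥Fomega) : ℝ := (exists_rep p).choose.2

lemma repT_mem (p : ↥Fomega) : repT p ∈ Icc (0:ℝ) 1 := (exists_rep p).choose_spec.1

lemma rep_spec (p : ↥Fomega) : (p : ℝ × ℝ) = repT p • bp (repIdx p) :=
  (exists_rep p).choose_spec.2

lemma sl_mul (i : ℕ) : sl i * ((i:ℝ) + 1) = 1 := by
  have : ((i:ℝ) + 1) ≠ 0 := by positivity
  rw [sl, one_div, inv_mul_cancel₀ this]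

/-! ### Fan maps -/

def fanMap (σ : Equiv.Perm ℕ) (φ : ℕ → ℝ → ℝ)
    (hφ : ∀ k, MapsTo (φ k) (Icc (0:ℝ) 1) (Icc (0:ℝ) 1)) (p : ↥Fomega) : ↥Fomega :=
  ⟨(φ (repIdx p) (repT p)) • bp (σ (repIdx p)), smul_bp_mem _ (hφ _ (repT_mem p))⟩

lemma fanMap_val (σ : Equiv.Perm ℕ) (φ : ℕ → ℝ → ℝ)
    (hφ : ∀ k, MapsTo (φ k) (Icc (0:ℝ) 1) (Icc (0:ℝ) 1)) (hφ0 : ∀ k, φ k 0 = 0)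
    {i : ℕ} {t : ℝ} (ht : t ∈ Icc (0:ℝ) 1)
    (p : ↥Fomega) (hp : (p : ℝ × ℝ) = t • bp i) :
    (fanMap σ φ hφ p : ℝ × ℝ) = (φ i t) • bp (σ i) := by
  have hs := rep_spec p
  by_cases h0 : t = 0
  · subst h0
    have hz : repT p • bp (repIdx p) = 0 := by rw [← hs, hp, zero_smul]
    have h1 : repT p = 0 := smul_bp_eq_zero.1 hz
    simp [fanMap, h1, hφ0, zero_smul]
  · obtain ⟨hik, htk⟩ := rep_unique (hp ▸ hs) h0
    simp [fanMap, ← hik, ← htk]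

def fanEquiv (σ : Equiv.Perm ℕ) (φ ψ : ℕ → ℝ → ℝ)
    (hφ : ∀ k, MapsTo (φ k) (Icc (0:ℝ) 1) (Icc (0:ℝ) 1))
    (hψ : ∀ k, MapsTo (ψ k) (Icc (0:ℝ) 1) (Icc (0:ℝ) 1))
    (hφ0 : ∀ k, φ k 0 = 0) (hψ0 : ∀ k, ψ k 0 = 0)
    (hinv1 : ∀ k t, t ∈ Icc (0:ℝ) 1 → ψ (σ k) (φ k t) = t)
    (hinv2 : ∀ k u, u ∈ Icc (0:ℝ) 1 → φ k (ψ (σ k) u) = u) : ↥Fomega ≃ ↥Fomega where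
  toFun := fanMap σ φ hφ
  invFun := fanMap σ.symm ψ hψ
  left_inv p := by
    apply Subtype.ext
    have h1 := fanMap_val σ φ hφ hφ0 (repT_mem p) p (rep_spec p)
    have h2 := fanMap_val σ.symm ψ hψ hψ0 (hφ _ (repT_mem p)) (fanMap σ φ hφ p) h1
    rw [h2, Equiv.symm_apply_apply, hinv1 _ _ (repT_mem p), ← rep_spec p]
  right_inv p := by
    apply Subtype.ext
    have h1 := fanMap_val σ.symm ψ hψ hψ0 (repT_mem p) p (rep_spec p)
    have h2 := fanMap_val σ φ hφ hφ0 (hψ _ (repT_mem p)) (fanMap σ.symm ψ hψ p) h1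
    rw [h2, Equiv.apply_symm_apply]
    have h3 := hinv2 (σ.symm (repIdx p)) (repT p) (repT_mem p)
    rw [Equiv.apply_symm_apply] at h3
    rw [h3, ← rep_spec p]

lemma contOn_leg (σ : Equiv.Perm ℕ) (φ : ℕ → ℝ → ℝ)
    (hφ : ∀ k, MapsTo (φ k) (Icc (0:ℝ) 1) (Icc (0:ℝ) 1)) (hφ0 : ∀ k, φ k 0 = 0)
    (k : ℕ) (hck : Continuous (φ k)) :
    ContinuousOn (fun p : ↥Fomega => (fanMap σ φ hφ p : ℝ × ℝ))
      {p : ↥Fomega | (p : ℝ × ℝ) ∈ leg k} := by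
  apply ContinuousOn.congr
    (f := fun p : ↥Fomega => (φ k (((p : ℝ × ℝ)).1 * ((k:ℝ) + 1))) • bp (σ k))
  · exact ((hck.comp ((continuous_fst.comp continuous_subtype_val).mul
      continuous_const)).smul continuous_const).continuousOn
  · intro p hp
    obtain ⟨t, ht, hpt⟩ := mem_leg.1 hp
    have hval : ((p : ℝ × ℝ)).1 * ((k:ℝ) + 1) = t := by
      rw [hpt, smul_bp_def]
      show t * sl k * ((k:ℝ) + 1) = t
      rw [mul_assoc, sl_mul, mul_one]
    simp only [fanMap_val σ φ hφ hφ0 ht p hpt, hval]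

lemma contOn_rest (σ : Equiv.Perm ℕ) (φ : ℕ → ℝ → ℝ)
    (hφ : ∀ k, MapsTo (φ k) (Icc (0:ℝ) 1) (Icc (0:ℝ) 1)) (hφ0 : ∀ k, φ k 0 = 0)
    (i j : ℕ) (hσ : ∀ k, k ≠ i → k ≠ j → σ k = k) (hφid : ∀ k, k ≠ i → k ≠ j → φ k = id) :
    ContinuousOn (fun p : ↥Fomega => (fanMap σ φ hφ p : ℝ × ℝ))
      {p : ↥Fomega | (p : ℝ × ℝ) ∈ legsIn {k | k ≠ i ∧ k ≠ j}} := by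
  apply ContinuousOn.congr (f := fun p : ↥Fomega => (p : ℝ × ℝ))
  · exact continuous_subtype_val.continuousOn
  · intro p hp
    simp only [legsIn, mem_iUnion, mem_setOf_eq] at hp
    obtain ⟨k, ⟨hki, hkj⟩, hpk⟩ := hp
    obtain ⟨t, ht, hpt⟩ := mem_leg.1 hpk
    show (fanMap σ φ hφ p : ℝ × ℝ) = (p : ℝ × ℝ)
    rw [fanMap_val σ φ hφ hφ0 ht p hpt, hφid k hki hkj, hσ k hki hkj, hpt]
    rfl

lemma fanMap_continuous (σ : Equiv.Perm ℕ) (φ : ℕ → ℝ → ℝ)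
    (hφ : ∀ k, MapsTo (φ k) (Icc (0:ℝ) 1) (Icc (0:ℝ) 1)) (hφ0 : ∀ k, φ k 0 = 0)
    (i j : ℕ) (hσ : ∀ k, k ≠ i → k ≠ j → σ k = k) (hφid : ∀ k, k ≠ i → k ≠ j → φ k = id)
    (hci : Continuous (φ i)) (hcj : Continuous (φ j)) :
    Continuous (fanMap σ φ hφ) := by
  rw [continuous_iff_isClosed]
  intro C hC
  have hD : IsClosed (Subtype.val '' C : Set (ℝ × ℝ)) :=
    (hC.isCompact.image continuous_subtype_val).isClosed
  set g := fun p : ↥Fomega => (fanMap σ φ hφ p : ℝ × ℝ) with hg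
  have hkey : ∀ s : Set ↥Fomega, IsClosed s → ContinuousOn g s →
      IsClosed (s ∩ fanMap σ φ hφ ⁻¹' C) := by
    intro s hs hgs
    have heq : s ∩ fanMap σ φ hφ ⁻¹' C = s ∩ g ⁻¹' (Subtype.val '' C) := by
      ext p
      simp only [mem_inter_iff, mem_preimage, hg]
      rw [Subtype.coe_injective.mem_set_image]
    rw [heq]
    exact hgs.preimage_isClosed_of_isClosed hs hD
  have hAi : IsClosed {p : ↥Fomega | (p : ℝ × ℝ) ∈ leg i} := by
    have : leg i = legsIn {i} := by simp [legsIn]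
    rw [this]
    exact (isClosed_legsIn _).preimage continuous_subtype_val
  have hAj : IsClosed {p : ↥Fomega | (p : ℝ × ℝ) ∈ leg j} := by
    have : leg j = legsIn {j} := by simp [legsIn]
    rw [this]
    exact (isClosed_legsIn _).preimage continuous_subtype_val
  have hAR : IsClosed {p : ↥Fomega | (p : ℝ × ℝ) ∈ legsIn {k | k ≠ i ∧ k ≠ j}} :=
    (isClosed_legsIn _).preimage continuous_subtype_val
  have hcover : fanMap σ φ hφ ⁻¹' C =
      ({p : ↥Fomega | (p : ℝ × ℝ) ∈ leg i} ∩ fanMap σ φ hφ ⁻¹' C) ∪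
      ({p : ↥Fomega | (p : ℝ × ℝ) ∈ leg j} ∩ fanMap σ φ hφ ⁻¹' C) ∪
      ({p : ↥Fomega | (p : ℝ × ℝ) ∈ legsIn {k | k ≠ i ∧ k ≠ j}} ∩ fanMap σ φ hφ ⁻¹' C) := by
    ext p
    simp only [mem_union, mem_inter_iff, mem_setOf_eq]
    constructor
    · intro hp
      have hrep : (p : ℝ × ℝ) ∈ leg (repIdx p) := mem_leg.2 ⟨repT p, repT_mem p, rep_spec p⟩
      by_cases h1 : repIdx p = i
      · exact Or.inl (Or.inl ⟨h1 ▸ hrep, hp⟩)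
      by_cases h2 : repIdx p = j
      · exact Or.inl (Or.inr ⟨h2 ▸ hrep, hp⟩)
      · refine Or.inr ⟨?_, hp⟩
        simp only [legsIn, mem_iUnion]
        exact ⟨repIdx p, ⟨h1, h2⟩, hrep⟩
    · rintro ((⟨_, h⟩ | ⟨_, h⟩) | ⟨_, h⟩) <;> exact h
  rw [hcover]
  exact ((hkey _ hAi (contOn_leg σ φ hφ hφ0 i hci)).union
    (hkey _ hAj (contOn_leg σ φ hφ hφ0 j hcj))).union
    (hkey _ hAR (contOn_rest σ φ hφ hφ0 i j hσ hφid))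

/-! ### Concrete homeomorphisms -/

def idF : ℕ → ℝ → ℝ := fun _ => id

lemma idF_mapsTo : ∀ k, MapsTo (idF k) (Icc (0:ℝ) 1) (Icc (0:ℝ) 1) := fun _ => mapsTo_id _

def swapEquiv (i j : ℕ) : ↥Fomega ≃ ↥Fomega :=
  fanEquiv (Equiv.swap i j) idF idF idF_mapsTo idF_mapsTo (fun _ => rfl) (fun _ => rfl)
    (fun _ _ _ => rfl) (fun _ _ _ => rfl)

def swapHomeo (i j : ℕ) : ↥Fomega ≃ₜ ↥Fomega :=
  Continuous.homeoOfEquivCompactToT2 (f := swapEquiv i j)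
    (fanMap_continuous (Equiv.swap i j) idF idF_mapsTo (fun _ => rfl) i j
      (fun k hki hkj => Equiv.swap_apply_of_ne_of_ne hki hkj)
      (fun _ _ _ => rfl) continuous_id continuous_id)

lemma swapHomeo_val (i j : ℕ) {k : ℕ} {t : ℝ} (ht : t ∈ Icc (0:ℝ) 1)
    (p : ↥Fomega) (hp : (p : ℝ × ℝ) = t • bp k) :
    (swapHomeo i j p : ℝ × ℝ) = t • bp (Equiv.swap i j k) :=
  fanMap_val (Equiv.swap i j) idF idF_mapsTo (fun _ => rfl) ht p hp

/-! ### Piecewise linear reparametrisation -/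

def pwl (s t : ℝ) : ℝ → ℝ := fun u =>
  if u ≤ s then (t / s) * u else t + ((1 - t) / (1 - s)) * (u - s)

lemma pwl_continuous {s t : ℝ} (hs : s ∈ Ioo (0:ℝ) 1) : Continuous (pwl s t) := by
  apply Continuous.if_le (by fun_prop) (by fun_prop) continuous_id continuous_const
  intro x hx
  subst hx
  simp only [id_eq] at *
  rw [div_mul_cancel₀ _ hs.1.ne']
  ring

lemma pwl_zero {s t : ℝ} (hs : s ∈ Ioo (0:ℝ) 1) : pwl s t 0 = 0 := by
  rw [pwl, if_pos hs.1.le, mul_zero]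

lemma pwl_mapsTo {s t : ℝ} (hs : s ∈ Ioo (0:ℝ) 1) (ht : t ∈ Ioo (0:ℝ) 1) :
    MapsTo (pwl s t) (Icc (0:ℝ) 1) (Icc (0:ℝ) 1) := by
  intro u hu
  obtain ⟨hu0, hu1⟩ := hu
  rw [pwl]
  split_ifs with h
  · constructor
    · exact mul_nonneg (div_nonneg ht.1.le hs.1.le) hu0
    · have h1 : (t / s) * u ≤ (t / s) * s :=
        mul_le_mul_of_nonneg_left h (div_nonneg ht.1.le hs.1.le)
      rw [div_mul_cancel₀ _ hs.1.ne'] at h1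
      linarith [ht.2]
  · push_neg at h
    have h1s : (0:ℝ) < 1 - s := by linarith [hs.2]
    have h1t : (0:ℝ) ≤ 1 - t := by linarith [ht.2]
    have hd : (0:ℝ) ≤ (1 - t) / (1 - s) := div_nonneg h1t h1s.le
    constructor
    · have : (0:ℝ) ≤ ((1 - t) / (1 - s)) * (u - s) := mul_nonneg hd (by linarith)
      linarith [ht.1]
    · have h2 : ((1 - t) / (1 - s)) * (u - s) ≤ ((1 - t) / (1 - s)) * (1 - s) :=
        mul_le_mul_of_nonneg_left (by linarith) hd
      rw [div_mul_cancel₀ _ h1s.ne'] at h2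
      linarith

lemma pwl_inv {s t : ℝ} (hs : s ∈ Ioo (0:ℝ) 1) (ht : t ∈ Ioo (0:ℝ) 1) :
    ∀ u ∈ Icc (0:ℝ) 1, pwl t s (pwl s t u) = u := by
  intro u hu
  have h1s : (0:ℝ) < 1 - s := by linarith [hs.2]
  have h1t : (0:ℝ) < 1 - t := by linarith [ht.2]
  have hs0 := hs.1.ne'
  have ht0 := ht.1.ne'
  rw [pwl, pwl]
  split_ifs with h h2 h3
  · -- u ≤ s, (t/s)*u ≤ t
    field_simp
  · -- u ≤ s but ¬ (t/s)*u ≤ t : impossible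
    exfalso
    apply h2
    have : (t / s) * u ≤ (t / s) * s :=
      mul_le_mul_of_nonneg_left h (div_nonneg ht.1.le hs.1.le)
    rwa [div_mul_cancel₀ _ hs.1.ne'] at this
  · -- u > s but branch ≤ t : impossible
    exfalso
    push_neg at h
    have hpos : (0:ℝ) < ((1 - t) / (1 - s)) * (u - s) :=
      mul_pos (div_pos h1t h1s) (by linarith)
    linarith
  · push_neg at h
    field_simp
    ring

def stF (s t : ℝ) : ℕ → ℝ → ℝ := fun k => if k = 0 then pwl s t else id

lemma stF_mapsTo {s t : ℝ} (hs : s ∈ Ioo (0:ℝ) 1) (ht : t ∈ Ioo (0:ℝ) 1) :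
    ∀ k, MapsTo (stF s t k) (Icc (0:ℝ) 1) (Icc (0:ℝ) 1) := by
  intro k
  rw [stF]
  split_ifs
  · exact pwl_mapsTo hs ht
  · exact mapsTo_id _

lemma stF_zero {s t : ℝ} (hs : s ∈ Ioo (0:ℝ) 1) : ∀ k, stF s t k 0 = 0 := by
  intro k
  rw [stF]
  split_ifs
  · exact pwl_zero hs
  · rfl

def stretchEquiv {s t : ℝ} (hs : s ∈ Ioo (0:ℝ) 1) (ht : t ∈ Ioo (0:ℝ) 1) :
    ↥Fomega ≃ ↥Fomega :=
  fanEquiv (Equiv.refl ℕ) (stF s t) (stF t s) (stF_mapsTo hs ht) (stF_mapsTo ht hs)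
    (stF_zero hs) (stF_zero ht)
    (by
      intro k u hu
      show stF t s k (stF s t k u) = u
      simp only [stF]
      split_ifs
      · exact pwl_inv hs ht u hu
      · rfl)
    (by
      intro k u hu
      show stF s t k (stF t s k u) = u
      simp only [stF]
      split_ifs
      · exact pwl_inv ht hs u hu
      · rfl)

def stretchHomeo {s t : ℝ} (hs : s ∈ Ioo (0:ℝ) 1) (ht : t ∈ Ioo (0:ℝ) 1) :
    ↥Fomega ≃ₜ ↥Fomega :=
  Continuous.homeoOfEquivCompactToT2 (f := stretchEquiv hs ht)
    (fanMap_continuous (Equiv.refl ℕ) (stF s t) (stF_mapsTo hs ht) (stF_zero hs) 0 0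
      (fun _ _ _ => rfl)
      (fun k hk _ => by rw [stF, if_neg hk])
      (by rw [stF, if_pos rfl]; exact pwl_continuous hs)
      (by rw [stF, if_pos rfl]; exact pwl_continuous hs))

lemma stretchHomeo_val {s t : ℝ} (hs : s ∈ Ioo (0:ℝ) 1) (ht : t ∈ Ioo (0:ℝ) 1)
    {u : ℝ} (hu : u ∈ Icc (0:ℝ) 1) (p : ↥Fomega) (hp : (p : ℝ × ℝ) = u • bp 0) :
    (stretchHomeo hs ht p : ℝ × ℝ) = pwl s t u • bp 0 :=
  (fanMap_val (Equiv.refl ℕ) (stF s t) (stF_mapsTo hs ht) (stF_zero hs) hu p hp).trans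
    (by simp [stF])

/-! ### Canonical points -/

lemma mem01_0 : (0:ℝ) ∈ Icc (0:ℝ) 1 := ⟨le_refl 0, zero_le_one⟩
lemma mem01_1 : (1:ℝ) ∈ Icc (0:ℝ) 1 := ⟨zero_le_one, le_refl 1⟩
lemma mem01_h : (1/2:ℝ) ∈ Icc (0:ℝ) 1 := by norm_num

def oPt : ↥Fomega := pt 0 0 mem01_0
def ePt : ↥Fomega := pt 0 1 mem01_1
def mPt : ↥Fomega := pt 0 (1/2) mem01_h

lemma oPt_val : (oPt : ℝ × ℝ) = 0 := zero_smul _ _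
lemma ePt_val : (ePt : ℝ × ℝ) = (1:ℝ) • bp 0 := rfl
lemma mPt_val : (mPt : ℝ × ℝ) = (1/2:ℝ) • bp 0 := rfl

lemma ne_oPt_iff {p : ↥Fomega} : p ≠ oPt ↔ (p : ℝ × ℝ) ≠ 0 := by
  rw [ne_eq, ne_eq, ← oPt_val, Subtype.ext_iff]

lemma not_mem_leg {k m : ℕ} {t : ℝ} (hk : k ≠ m) (ht : t ≠ 0) : t • bp k ∉ leg m := by
  intro h
  obtain ⟨u, _, he⟩ := mem_leg.1 h
  exact hk (rep_unique he ht).1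

/-! ### Clamped leg parametrisations -/

def clamp (t : ℝ) : ℝ := max 0 (min 1 t)

lemma clamp_mem (t : ℝ) : clamp t ∈ Icc (0:ℝ) 1 :=
  ⟨le_max_left _ _, max_le zero_le_one (min_le_left _ _)⟩

lemma clamp_eq {t : ℝ} (h : t ∈ Icc (0:ℝ) 1) : clamp t = t := by
  rw [clamp, min_eq_right h.2, max_eq_right h.1]

def legPt (k : ℕ) (t : ℝ) : ↥Fomega := ⟨clamp t • bp k, smul_bp_mem k (clamp_mem t)⟩

lemma legPt_continuous (k : ℕ) : Continuous (legPt k) :=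
  Continuous.subtype_mk
    ((continuous_const.max (continuous_const.min continuous_id)).smul continuous_const) _

lemma legPt_val {k : ℕ} {t : ℝ} (h : t ∈ Icc (0:ℝ) 1) : (legPt k t : ℝ × ℝ) = t • bp k := by
  rw [legPt]
  simp only [clamp_eq h]

lemma legPt_zero (k : ℕ) : legPt k 0 = oPt := by
  apply Subtype.ext
  rw [legPt_val mem01_0, zero_smul, oPt_val]

lemma legPt_image_precon (k : ℕ) {s : Set ℝ} (hs : IsPreconnected s) :
    IsPreconnected (legPt k '' s) :=
  hs.image _ (legPt_continuous k).continuousOn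

/-! ### Closed and open subsets of the fan -/

lemma isClosed_legSet (k : ℕ) : IsClosed {p : ↥Fomega | (p : ℝ × ℝ) ∈ leg k} := by
  have h : leg k = legsIn {k} := by simp [legsIn]
  rw [h]
  exact (isClosed_legsIn _).preimage continuous_subtype_val

lemma isOpen_notLeg (k : ℕ) : IsOpen {p : ↥Fomega | (p : ℝ × ℝ) ∉ leg k} := by
  have : {p : ↥Fomega | (p : ℝ × ℝ) ∉ leg k} = {p : ↥Fomega | (p : ℝ × ℝ) ∈ leg k}ᶜ := rfl
  rw [this]
  exact (isClosed_legSet k).isOpen_compl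

lemma legMinus_compl (k : ℕ) :
    {p : ↥Fomega | (p : ℝ × ℝ) ∈ leg k ∧ p ≠ oPt}ᶜ =
      {p : ↥Fomega | (p : ℝ × ℝ) ∈ legsIn {m | m ≠ k}} := by
  ext p
  simp only [mem_compl_iff, mem_setOf_eq, not_and, not_ne_iff, legsIn, mem_iUnion]
  constructor
  · intro hp
    by_cases hleg : (p : ℝ × ℝ) ∈ leg k
    · -- then p = oPt, so val = 0 lies on every other leg
      have h0 : (p : ℝ × ℝ) = 0 := by rw [hp hleg, oPt_val]
      exact ⟨k + 1, Nat.succ_ne_self k, mem_leg.2 ⟨0, mem01_0, by rw [h0, zero_smul]⟩⟩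
    · refine ⟨repIdx p, ?_, mem_leg.2 ⟨repT p, repT_mem p, rep_spec p⟩⟩
      intro hik
      exact hleg (hik ▸ mem_leg.2 ⟨repT p, repT_mem p, rep_spec p⟩)
  · rintro ⟨m, hmk, hpm⟩ hleg
    obtain ⟨t, ht, hpt⟩ := mem_leg.1 hpm
    by_cases ht0 : t = 0
    · exact Subtype.ext (by rw [hpt, ht0, zero_smul, oPt_val])
    · exact absurd (hpt ▸ hleg) (not_mem_leg hmk ht0)

lemma isOpen_legMinus (k : ℕ) :
    IsOpen {p : ↥Fomega | (p : ℝ × ℝ) ∈ leg k ∧ p ≠ oPt} := by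
  rw [← isClosed_compl_iff, legMinus_compl]
  exact (isClosed_legsIn _).preimage continuous_subtype_val

lemma legMinus_eq (k : ℕ) :
    {p : ↥Fomega | (p : ℝ × ℝ) ∈ leg k ∧ p ≠ oPt} = legPt k '' Ioc 0 1 := by
  ext p
  simp only [mem_setOf_eq, mem_image]
  constructor
  · rintro ⟨hleg, hne⟩
    obtain ⟨t, ht, hpt⟩ := mem_leg.1 hleg
    have ht0 : t ≠ 0 := by
      intro h
      exact (ne_oPt_iff.1 hne) (by rw [hpt, h, zero_smul])
    exact ⟨t, ⟨ht.1.lt_of_ne (Ne.symm ht0), ht.2⟩,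
      Subtype.ext (by rw [legPt_val ht, hpt])⟩
  · rintro ⟨t, ht, rfl⟩
    have ht' : t ∈ Icc (0:ℝ) 1 := ⟨ht.1.le, ht.2⟩
    constructor
    · exact mem_leg.2 ⟨t, ht', legPt_val ht'⟩
    · rw [ne_oPt_iff, legPt_val ht']
      exact fun h => ht.1.ne' (smul_bp_eq_zero.1 h)

lemma legMinus_precon (k : ℕ) :
    IsPreconnected {p : ↥Fomega | (p : ℝ × ℝ) ∈ leg k ∧ p ≠ oPt} := by
  rw [legMinus_eq]
  exact legPt_image_precon k isPreconnected_Ioc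

/-! ### A generic disconnection lemma -/

lemma not_precon_of_split {s U V : Set ↥Fomega} (hU : IsOpen U) (hV : IsOpen V)
    (hdis : Disjoint U V) (hUV : U ∪ V = s) (hUne : U.Nonempty) (hVne : V.Nonempty) :
    ¬ IsPreconnected s := by
  intro h
  obtain ⟨x, _, hxU, hxV⟩ := h U V hU hV (by rw [hUV])
    (by obtain ⟨u, hu⟩ := hUne; exact ⟨u, by rw [← hUV]; exact Or.inl hu, hu⟩)
    (by obtain ⟨v, hv⟩ := hVne; exact ⟨v, by rw [← hUV]; exact Or.inr hv, hv⟩)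
  exact (hdis.ne_of_mem hxU hxV) rfl

/-! ### Sets splitting the complement of `mPt` -/

def upperSeg : Set (ℝ × ℝ) := (fun t : ℝ => t • bp 0) '' Icc (1/2) 1

def lowerSeg : Set (ℝ × ℝ) := (fun t : ℝ => t • bp 0) '' Icc 0 (1/2)

lemma isClosed_upperSeg : IsClosed upperSeg :=
  (isCompact_Icc.image (by fun_prop)).isClosed

lemma isClosed_lowerSeg : IsClosed lowerSeg :=
  (isCompact_Icc.image (by fun_prop)).isClosed

def Um : Set ↥Fomega := {p | ∃ t, t ∈ Ioc (1/2:ℝ) 1 ∧ (p : ℝ × ℝ) = t • bp 0}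

def Vm : Set ↥Fomega := {p | (p : ℝ × ℝ) ∉ upperSeg}

lemma isOpen_Vm : IsOpen Vm :=
  (isClosed_upperSeg.preimage continuous_subtype_val).isOpen_compl

lemma Um_compl : Umᶜ = {p : ↥Fomega | (p : ℝ × ℝ) ∈ lowerSeg ∪ legsIn {m | m ≠ 0}} := by
  ext p
  simp only [Um, mem_compl_iff, mem_setOf_eq, not_exists, mem_union]
  constructor
  · intro hp
    have hs := rep_spec p
    have ht := repT_mem p
    by_cases ht0 : repT p = 0
    · refine Or.inl ⟨0, ⟨le_refl 0, by norm_num⟩, ?_⟩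
      show (0:ℝ) • bp 0 = (p : ℝ × ℝ)
      rw [hs, ht0, zero_smul, zero_smul]
    · by_cases hk : repIdx p = 0
      · rw [hk] at hs
        by_cases hhalf : repT p ≤ 1/2
        · exact Or.inl ⟨repT p, ⟨ht.1, hhalf⟩, hs.symm⟩
        · exact absurd (⟨⟨not_le.1 hhalf, ht.2⟩, hs⟩ :
            repT p ∈ Ioc (1/2:ℝ) 1 ∧ (p : ℝ × ℝ) = repT p • bp 0) (hp (repT p))
      · exact Or.inr (by
          simp only [legsIn, mem_iUnion]
          exact ⟨repIdx p, hk, mem_leg.2 ⟨repT p, ht, hs⟩⟩)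
  · rintro (⟨t, ht, hpt⟩ | hp) u ⟨hu, hpu⟩
    · rw [hpu] at hpt
      have := (rep_unique hpt.symm (by linarith [hu.1] : u ≠ 0)).2
      linarith [hu.1, ht.2]
    · simp only [legsIn, mem_iUnion] at hp
      obtain ⟨m, hm, hpm⟩ := hp
      rw [hpu] at hpm
      exact (not_mem_leg (Ne.symm hm) (by linarith [hu.1] : u ≠ 0)) hpm

lemma isOpen_Um : IsOpen Um := by
  rw [← isClosed_compl_iff, Um_compl]
  exact (isClosed_lowerSeg.union (isClosed_legsIn _)).preimage continuous_subtype_val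

lemma mem_Um_iff_upper {p : ↥Fomega} (hp : p ∈ Um) : (p : ℝ × ℝ) ∈ upperSeg := by
  obtain ⟨t, ht, hpt⟩ := hp
  exact ⟨t, ⟨ht.1.le, ht.2⟩, hpt.symm⟩

lemma Um_Vm_disjoint : Disjoint Um Vm := by
  rw [Set.disjoint_left]
  intro p hpU hpV
  exact hpV (mem_Um_iff_upper hpU)

lemma ePt_mem_Um : ePt ∈ Um := ⟨1, ⟨by norm_num, le_refl 1⟩, rfl⟩

lemma oPt_mem_Vm : oPt ∈ Vm := by
  rintro ⟨t, ht, he⟩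
  rw [oPt_val] at he
  have := smul_bp_eq_zero.1 he
  linarith [ht.1]

lemma Um_union_Vm : Um ∪ Vm = {mPt}ᶜ := by
  ext p
  simp only [mem_union, mem_compl_iff, mem_singleton_iff]
  constructor
  · rintro (⟨t, ht, hpt⟩ | hp) rfl
    · rw [mPt_val] at hpt
      have := (rep_unique hpt (by norm_num : (1/2:ℝ) ≠ 0)).2
      linarith [ht.1]
    · exact hp ⟨1/2, ⟨le_refl _, by norm_num⟩, mPt_val.symm⟩
  · intro hp
    by_cases hup : (p : ℝ × ℝ) ∈ upperSeg
    · obtain ⟨t, ht, hpt⟩ := hup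
      left
      have ht2 : t ≠ 1/2 := by
        intro h
        apply hp
        apply Subtype.ext
        rw [mPt_val, ← hpt, h]
      exact ⟨t, ⟨lt_of_le_of_ne ht.1 (Ne.symm ht2), ht.2⟩, hpt.symm⟩
    · exact Or.inr hup

lemma Um_precon : IsPreconnected Um := by
  have h : Um = legPt 0 '' Ioc (1/2) 1 := by
    ext p
    simp only [Um, mem_setOf_eq, mem_image]
    constructor
    · rintro ⟨t, ht, hpt⟩
      have ht' : t ∈ Icc (0:ℝ) 1 := ⟨by linarith [ht.1], ht.2⟩
      exact ⟨t, ht, Subtype.ext (by rw [legPt_val ht', hpt])⟩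
    · rintro ⟨t, ht, rfl⟩
      have ht' : t ∈ Icc (0:ℝ) 1 := ⟨by linarith [ht.1], ht.2⟩
      exact ⟨t, ht, legPt_val ht'⟩
  rw [h]
  exact legPt_image_precon 0 isPreconnected_Ioc

lemma Vm_precon : IsPreconnected Vm := by
  have h : Vm = ⋃₀ insert (legPt 0 '' Ico 0 (1/2))
      (range fun k => legPt (k+1) '' Icc 0 1) := by
    ext p
    simp only [Vm, mem_setOf_eq, mem_sUnion, mem_insert_iff, mem_range]
    constructor
    · intro hp
      have hs := rep_spec p
      have ht := repT_mem p
      by_cases ht0 : repT p = 0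
      · refine ⟨_, Or.inl rfl, ⟨0, ⟨le_refl 0, by norm_num⟩, ?_⟩⟩
        exact Subtype.ext (by rw [legPt_val mem01_0, zero_smul, hs, ht0, zero_smul])
      · rcases Nat.eq_zero_or_pos (repIdx p) with hk | hk
        · rw [hk] at hs
          have hhalf : repT p < 1/2 := by
            by_contra hh
            exact hp ⟨repT p, ⟨not_lt.1 hh, ht.2⟩, hs.symm⟩
          exact ⟨_, Or.inl rfl, ⟨repT p, ⟨ht.1, hhalf⟩,
            Subtype.ext (by rw [legPt_val ht, hs])⟩⟩
        · obtain ⟨m, hm⟩ := Nat.exists_eq_add_of_lt hk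
          have hm' : repIdx p = m + 1 := by omega
          refine ⟨_, Or.inr ⟨m, rfl⟩, ⟨repT p, ht, ?_⟩⟩
          apply Subtype.ext
          rw [legPt_val ht, hs, hm']
    · rintro ⟨s, hs, hps⟩
      rcases hs with rfl | ⟨k, rfl⟩
      · obtain ⟨t, ht, rfl⟩ := hps
        have ht' : t ∈ Icc (0:ℝ) 1 := ⟨ht.1, by linarith [ht.2]⟩
        rintro ⟨u, hu, hue⟩
        rw [legPt_val ht'] at hue
        have := (rep_unique hue (by linarith [hu.1] : u ≠ 0)).2
        linarith [hu.1, ht.2]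
      · obtain ⟨t, ht, rfl⟩ := hps
        rintro ⟨u, hu, hue⟩
        rw [legPt_val ht] at hue
        exact Nat.succ_ne_zero k ((rep_unique hue (by linarith [hu.1] : u ≠ 0)).1).symm
  rw [h]
  apply isPreconnected_sUnion oPt
  · rintro s (rfl | ⟨k, rfl⟩)
    · exact ⟨0, ⟨le_refl 0, by norm_num⟩, legPt_zero 0⟩
    · exact ⟨0, mem01_0, legPt_zero (k+1)⟩
  · rintro s (rfl | ⟨k, rfl⟩)
    · exact legPt_image_precon 0 isPreconnected_Ico
    · exact legPt_image_precon (k+1) isPreconnected_Icc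

/-! ### Connectivity of complements of the three canonical points -/

lemma E_ePt : IsPreconnected ({ePt}ᶜ : Set ↥Fomega) := by
  have h : ({ePt}ᶜ : Set ↥Fomega) = ⋃₀ insert (legPt 0 '' Ico 0 1)
      (range fun k => legPt (k+1) '' Icc 0 1) := by
    ext p
    simp only [mem_compl_iff, mem_singleton_iff, mem_sUnion, mem_insert_iff, mem_range]
    constructor
    · intro hp
      have hs := rep_spec p
      have ht := repT_mem p
      by_cases ht0 : repT p = 0
      · exact ⟨_, Or.inl rfl, ⟨0, ⟨le_refl 0, by norm_num⟩,
          Subtype.ext (by rw [legPt_val mem01_0, zero_smul, hs, ht0, zero_smul])⟩⟩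
      · rcases Nat.eq_zero_or_pos (repIdx p) with hk | hk
        · rw [hk] at hs
          have h1 : repT p ≠ 1 := by
            intro h1
            exact hp (Subtype.ext (by rw [hs, h1, ePt_val]))
          exact ⟨_, Or.inl rfl, ⟨repT p, ⟨ht.1, ht.2.lt_of_ne h1⟩,
            Subtype.ext (by rw [legPt_val ht, hs])⟩⟩
        · obtain ⟨m, hm⟩ := Nat.exists_eq_add_of_lt hk
          have hm' : repIdx p = m + 1 := by omega
          exact ⟨_, Or.inr ⟨m, rfl⟩, ⟨repT p, ht,
            Subtype.ext (by rw [legPt_val ht, hs, hm'])⟩⟩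
    · rintro ⟨s, hs, hps⟩
      rcases hs with rfl | ⟨k, rfl⟩
      · obtain ⟨t, ht, rfl⟩ := hps
        have ht' : t ∈ Icc (0:ℝ) 1 := ⟨ht.1, ht.2.le⟩
        intro he
        have hval : (t:ℝ) • bp 0 = (1:ℝ) • bp 0 := by
          rw [← legPt_val ht', he, ePt_val]
        exact ht.2.ne ((rep_unique hval.symm one_ne_zero).2).symm
      · obtain ⟨t, ht, rfl⟩ := hps
        intro he
        have hval : (t:ℝ) • bp (k+1) = (1:ℝ) • bp 0 := by
          rw [← legPt_val ht, he, ePt_val]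
        exact Nat.succ_ne_zero k ((rep_unique hval.symm one_ne_zero).1).symm
  rw [h]
  apply isPreconnected_sUnion oPt
  · rintro s (rfl | ⟨k, rfl⟩)
    · exact ⟨0, ⟨le_refl 0, by norm_num⟩, legPt_zero 0⟩
    · exact ⟨0, mem01_0, legPt_zero (k+1)⟩
  · rintro s (rfl | ⟨k, rfl⟩)
    · exact legPt_image_precon 0 isPreconnected_Ico
    · exact legPt_image_precon (k+1) isPreconnected_Icc

lemma not_E_mPt : ¬ IsPreconnected ({mPt}ᶜ : Set ↥Fomega) :=
  not_precon_of_split isOpen_Um isOpen_Vm Um_Vm_disjoint Um_union_Vm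
    ⟨ePt, ePt_mem_Um⟩ ⟨oPt, oPt_mem_Vm⟩

lemma oPt_mem_leg (k : ℕ) : (oPt : ℝ × ℝ) ∈ leg k :=
  mem_leg.2 ⟨0, mem01_0, by rw [oPt_val, zero_smul]⟩

lemma Uo_union_Vo :
    {p : ↥Fomega | (p : ℝ × ℝ) ∈ leg 0 ∧ p ≠ oPt} ∪ {p : ↥Fomega | (p : ℝ × ℝ) ∉ leg 0}
      = ({oPt}ᶜ : Set ↥Fomega) := by
  ext p
  simp only [mem_union, mem_setOf_eq, mem_compl_iff, mem_singleton_iff]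
  constructor
  · rintro (⟨_, hne⟩ | hleg)
    · exact hne
    · intro h
      exact hleg (h ▸ oPt_mem_leg 0)
  · intro hne
    by_cases h : (p : ℝ × ℝ) ∈ leg 0
    · exact Or.inl ⟨h, hne⟩
    · exact Or.inr h

lemma ePt_ne_oPt : ePt ≠ oPt := by
  rw [ne_oPt_iff, ePt_val]
  exact fun h => one_ne_zero (smul_bp_eq_zero.1 h)

lemma not_E_oPt : ¬ IsPreconnected ({oPt}ᶜ : Set ↥Fomega) := by
  apply not_precon_of_split (isOpen_legMinus 0) (isOpen_notLeg 0) ?_ Uo_union_Vo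
    ⟨ePt, mem_leg.2 ⟨1, mem01_1, rfl⟩, ePt_ne_oPt⟩
    ⟨pt 1 1 mem01_1, not_mem_leg one_ne_zero one_ne_zero⟩
  rw [Set.disjoint_left]
  rintro p ⟨hp, _⟩ hnp
  exact hnp hp

/-! ### The partition invariant -/

def Pprop (x : ↥Fomega) : Prop :=
  ∃ U V : Set ↥Fomega, IsOpen U ∧ IsOpen V ∧ Disjoint U V ∧
    U ∪ V = {x}ᶜ ∧ U.Nonempty ∧ V.Nonempty ∧ IsPreconnected U ∧ IsPreconnected V

lemma P_mPt : Pprop mPt :=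
  ⟨Um, Vm, isOpen_Um, isOpen_Vm, Um_Vm_disjoint, Um_union_Vm,
    ⟨ePt, ePt_mem_Um⟩, ⟨oPt, oPt_mem_Vm⟩, Um_precon, Vm_precon⟩

lemma subset_legMinus_of_precon {U : Set ↥Fomega} (hUc : IsPreconnected U)
    (hUo : U ⊆ ({oPt}ᶜ : Set ↥Fomega)) {p : ↥Fomega} (hpU : p ∈ U) :
    U ⊆ {q : ↥Fomega | (q : ℝ × ℝ) ∈ leg (repIdx p) ∧ q ≠ oPt} := by
  intro q hq
  have hqo : q ≠ oPt := hUo hq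
  have hpo : p ≠ oPt := hUo hpU
  refine ⟨?_, hqo⟩
  by_contra hqleg
  have hsub : U ⊆ {r : ↥Fomega | (r : ℝ × ℝ) ∈ leg (repIdx p) ∧ r ≠ oPt} ∪
      {r : ↥Fomega | (r : ℝ × ℝ) ∉ leg (repIdx p)} := by
    intro r hr
    by_cases h : (r : ℝ × ℝ) ∈ leg (repIdx p)
    · exact Or.inl ⟨h, hUo hr⟩
    · exact Or.inr h
  have hpleg : (p : ℝ × ℝ) ∈ leg (repIdx p) :=
    mem_leg.2 ⟨repT p, repT_mem p, rep_spec p⟩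
  obtain ⟨x, _, hx1, hx2⟩ := hUc _ _ (isOpen_legMinus (repIdx p))
    (isOpen_notLeg (repIdx p)) hsub ⟨p, hpU, hpleg, hpo⟩ ⟨q, hq, hqleg⟩
  exact hx2 hx1.1

lemma not_P_oPt : ¬ Pprop oPt := by
  rintro ⟨U, V, _, _, _, hUV, ⟨p, hpU⟩, ⟨q, hqV⟩, hUc, hVc⟩
  have hUsub : U ⊆ ({oPt}ᶜ : Set ↥Fomega) := hUV ▸ subset_union_left
  have hVsub : V ⊆ ({oPt}ᶜ : Set ↥Fomega) := hUV ▸ subset_union_right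
  have hU' := subset_legMinus_of_precon hUc hUsub hpU
  have hV' := subset_legMinus_of_precon hVc hVsub hqV
  set i := repIdx p
  set j := repIdx q
  set k := max i j + 1 with hk
  have hki : k ≠ i := by omega
  have hkj : k ≠ j := by omega
  have hmem : pt k 1 mem01_1 ∈ ({oPt}ᶜ : Set ↥Fomega) := by
    simp only [mem_compl_iff, mem_singleton_iff]
    exact ne_oPt_iff.2 fun h => one_ne_zero (smul_bp_eq_zero.1 h)
  rw [← hUV] at hmem
  rcases hmem with h | h
  · exact not_mem_leg hki one_ne_zero (hU' h).1
  · exact not_mem_leg hkj one_ne_zero (hV' h).1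

/-! ### Invariance of the invariants -/

lemma E_inv {x y : ↥Fomega} (h : ↥Fomega ≃ₜ ↥Fomega) (hxy : h x = y) :
    IsPreconnected ({x}ᶜ : Set ↥Fomega) → IsPreconnected ({y}ᶜ : Set ↥Fomega) := by
  intro hE
  have himg : (h : ↥Fomega → ↥Fomega) '' ({x}ᶜ) = {y}ᶜ := by
    rw [Set.image_compl_eq h.bijective, image_singleton, hxy]
  rw [← himg]
  exact hE.image _ h.continuous.continuousOn

lemma P_inv {x y : ↥Fomega} (h : ↥Fomega ≃ₜ ↥Fomega) (hxy : h x = y) :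
    Pprop x → Pprop y := by
  rintro ⟨U, V, hU, hV, hdis, hUV, hUne, hVne, hUc, hVc⟩
  refine ⟨h '' U, h '' V, h.isOpenMap U hU, h.isOpenMap V hV,
    Set.disjoint_image_of_injective h.injective hdis, ?_,
    hUne.image _, hVne.image _, hUc.image _ h.continuous.continuousOn,
    hVc.image _ h.continuous.continuousOn⟩
  rw [← image_union, hUV, Set.image_compl_eq h.bijective, image_singleton, hxy]

/-! ### Orbits -/

lemma orbit_eq_of {x y : ↥Fomega} (h : ↥Fomega ≃ₜ ↥Fomega) (hxy : h x = y) :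
    orbit (↥Fomega) x = orbit (↥Fomega) y := by
  ext z
  constructor
  · rintro ⟨g, rfl⟩
    refine ⟨h.symm.trans g, ?_⟩
    rw [Homeomorph.trans_apply, ← hxy, Homeomorph.symm_apply_apply]
  · rintro ⟨g, rfl⟩
    exact ⟨h.trans g, by rw [Homeomorph.trans_apply, hxy]⟩

lemma of_orbit_eq {x y : ↥Fomega} (h : orbit (↥Fomega) x = orbit (↥Fomega) y) :
    ∃ g : ↥Fomega ≃ₜ ↥Fomega, g x = y := by
  have : y ∈ orbit (↥Fomega) x := h ▸ ⟨Homeomorph.refl _, rfl⟩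
  exact this

lemma pwl_self {s t : ℝ} (hs0 : s ≠ 0) : pwl s t s = t := by
  rw [pwl, if_pos le_rfl, div_mul_cancel₀ _ hs0]

lemma orbit_cases (x : ↥Fomega) :
    orbit (↥Fomega) x = orbit (↥Fomega) oPt ∨ orbit (↥Fomega) x = orbit (↥Fomega) ePt ∨
      orbit (↥Fomega) x = orbit (↥Fomega) mPt := by
  have hs := rep_spec x
  have ht := repT_mem x
  by_cases ht0 : repT x = 0
  · left
    have hx : x = oPt := Subtype.ext (by rw [hs, ht0, zero_smul, oPt_val])
    rw [hx]
  · by_cases ht1 : repT x = 1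
    · right; left
      apply orbit_eq_of (swapHomeo (repIdx x) 0)
      apply Subtype.ext
      rw [swapHomeo_val (repIdx x) 0 ht x hs, Equiv.swap_apply_left, ht1, ePt_val]
    · right; right
      have htIoo : repT x ∈ Ioo (0:ℝ) 1 :=
        ⟨ht.1.lt_of_ne (Ne.symm ht0), ht.2.lt_of_ne ht1⟩
      have hhalf : (1/2:ℝ) ∈ Ioo (0:ℝ) 1 := by norm_num
      apply orbit_eq_of ((swapHomeo (repIdx x) 0).trans (stretchHomeo htIoo hhalf))
      apply Subtype.ext
      rw [Homeomorph.trans_apply]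
      have h1 : ((swapHomeo (repIdx x) 0) x : ℝ × ℝ) = repT x • bp 0 := by
        rw [swapHomeo_val (repIdx x) 0 ht x hs, Equiv.swap_apply_left]
      rw [stretchHomeo_val htIoo hhalf ht _ h1, pwl_self ht0, mPt_val]

/-- The fan `F_ω` is `1/3`-homogeneous. -/
theorem Fomega_oneThirdHomogeneous : OneOverHomogeneous Fomega 3 := by
  have horb : orbits (↥Fomega) =
      {orbit (↥Fomega) oPt, orbit (↥Fomega) ePt, orbit (↥Fomega) mPt} := by
    ext A
    constructor
    · rintro ⟨x, rfl⟩
      rcases orbit_cases x with h | h | h <;> simp [h]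
    · rintro (rfl | rfl | rfl)
      exacts [⟨oPt, rfl⟩, ⟨ePt, rfl⟩, ⟨mPt, rfl⟩]
  have hoe : orbit (↥Fomega) oPt ≠ orbit (↥Fomega) ePt := by
    intro h
    obtain ⟨g, hg⟩ := of_orbit_eq h
    exact not_E_oPt (E_inv g.symm (by rw [← hg, Homeomorph.symm_apply_apply]) E_ePt)
  have hom : orbit (↥Fomega) oPt ≠ orbit (↥Fomega) mPt := by
    intro h
    obtain ⟨g, hg⟩ := of_orbit_eq h
    exact not_P_oPt (P_inv g.symm (by rw [← hg, Homeomorph.symm_apply_apply]) P_mPt)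
  have hem : orbit (↥Fomega) ePt ≠ orbit (↥Fomega) mPt := by
    intro h
    obtain ⟨g, hg⟩ := of_orbit_eq h
    exact not_E_mPt (E_inv g hg E_ePt)
  show (orbits (↥Fomega)).ncard = 3
  rw [horb]
  exact Set.ncard_eq_three.2 ⟨_, _, _, hoe, hom, hem, rfl⟩

end

end FansHomogeneity
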